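/- Let α ≥ 0 and d ≥ 0. Then inf{ r̄(0, y₁, 0, y₂) : y₁ ∈ [0, d], y₂ ∈ [0, d] } = min( 1 , max( 1/2 , 1 − α , α − d ) , max( 1/2 , 1 − α/2 , (α − d)/2 ) ). (This is the symmetric DMT of the two-user interference channel in which the direct links are non-fading and only the two cross links fade; the right-hand side is the formula of the paper's theorem on fading interfering links.) -/
import Mathlib


/-- Per-state symmetric g.d.o.f. `r̄(x₁,y₁,x₂,y₂)` of the two-user interference
channel with direct fading exponents `x₁,x₂` and cross fading exponents `y₁,y₂`,
achievable when the transmitters know the channel gains. -/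
noncomputable def rbar (α x₁ y₁ x₂ y₂ : ℝ) : ℝ :=
  let a11 := max (1 - α - x₁ + y₂) 0
  let a12 := max (1 - x₁) 0
  let a13 := max (max (1 - α - x₁ + y₂) (α - y₁)) 0
  let a14 := max (max (1 - x₁) (α - y₁)) 0
  let a21 := max (1 - α - x₂ + y₁) 0
  let a22 := max (1 - x₂) 0
  let a23 := max (max (1 - α - x₂ + y₁) (α - y₂)) 0
  let a24 := max (max (1 - x₂) (α - y₂)) 0
  min a12 (min a22 (min ((a11 + a24)/2) (min ((a21 + a14)/2) (min ((a13 + a23)/2)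
    (min ((a11 + a14 + a23)/3) ((a21 + a24 + a13)/3))))))

/-- Lower bound: the claimed value is a lower bound on `rbar` over the box. -/
lemma rbar_lb (α d y₁ y₂ : ℝ) (hα : 0 ≤ α) (hd : 0 ≤ d)
    (h1 : 0 ≤ y₁) (h2 : y₁ ≤ d) (h3 : 0 ≤ y₂) (h4 : y₂ ≤ d) :
    min 1 (min (max (1/2) (max (1 - α) (α - d)))
      (max (1/2) (max (1 - α/2) ((α - d)/2)))) ≤ rbar α 0 y₁ 0 y₂ := by
  have hmA : min 1 (min (max (1/2 : ℝ) (max (1 - α) (α - d)))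
      (max (1/2) (max (1 - α/2) ((α - d)/2)))) ≤ max (1/2 : ℝ) (max (1 - α) (α - d)) :=
    le_trans (min_le_right _ _) (min_le_left _ _)
  have hmB : min 1 (min (max (1/2 : ℝ) (max (1 - α) (α - d)))
      (max (1/2) (max (1 - α/2) ((α - d)/2)))) ≤ max (1/2 : ℝ) (max (1 - α/2) ((α - d)/2)) :=
    le_trans (min_le_right _ _) (min_le_right _ _)
  have hm1 : min 1 (min (max (1/2 : ℝ) (max (1 - α) (α - d)))
      (max (1/2) (max (1 - α/2) ((α - d)/2)))) ≤ 1 := min_le_left _ _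
  unfold rbar
  simp only [sub_zero]
  -- facts about the a_ij
  have A11a : 1 - α + y₂ ≤ max (1 - α + y₂) 0 := le_max_left _ _
  have A11b : (0:ℝ) ≤ max (1 - α + y₂) 0 := le_max_right _ _
  have A21a : 1 - α + y₁ ≤ max (1 - α + y₁) 0 := le_max_left _ _
  have A21b : (0:ℝ) ≤ max (1 - α + y₁) 0 := le_max_right _ _
  have A13a : 1 - α + y₂ ≤ max (max (1 - α + y₂) (α - y₁)) 0 :=
    le_trans (le_max_left _ _) (le_max_left _ _)
  have A13b : α - y₁ ≤ max (max (1 - α + y₂) (α - y₁)) 0 :=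
    le_trans (le_max_right _ _) (le_max_left _ _)
  have A13c : (0:ℝ) ≤ max (max (1 - α + y₂) (α - y₁)) 0 := le_max_right _ _
  have A23a : 1 - α + y₁ ≤ max (max (1 - α + y₁) (α - y₂)) 0 :=
    le_trans (le_max_left _ _) (le_max_left _ _)
  have A23b : α - y₂ ≤ max (max (1 - α + y₁) (α - y₂)) 0 :=
    le_trans (le_max_right _ _) (le_max_left _ _)
  have A23c : (0:ℝ) ≤ max (max (1 - α + y₁) (α - y₂)) 0 := le_max_right _ _
  have A14a : (1:ℝ) ≤ max (max 1 (α - y₁)) 0 :=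
    le_trans (le_max_left _ _) (le_max_left _ _)
  have A14b : α - y₁ ≤ max (max (1:ℝ) (α - y₁)) 0 :=
    le_trans (le_max_right _ _) (le_max_left _ _)
  have A14c : (0:ℝ) ≤ max (max (1:ℝ) (α - y₁)) 0 := le_max_right _ _
  have A24a : (1:ℝ) ≤ max (max 1 (α - y₂)) 0 :=
    le_trans (le_max_left _ _) (le_max_left _ _)
  have A24b : α - y₂ ≤ max (max (1:ℝ) (α - y₂)) 0 :=
    le_trans (le_max_right _ _) (le_max_left _ _)
  have A24c : (0:ℝ) ≤ max (max (1:ℝ) (α - y₂)) 0 := le_max_right _ _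
  refine le_min ?_ (le_min ?_ (le_min ?_ (le_min ?_ (le_min ?_ (le_min ?_ ?_)))))
  · exact le_trans hm1 (le_max_left (1:ℝ) 0)
  · exact le_trans hm1 (le_max_left (1:ℝ) 0)
  · refine le_trans hmB (max_le ?_ (max_le ?_ ?_))
    · linarith
    · linarith
    · linarith
  · refine le_trans hmB (max_le ?_ (max_le ?_ ?_))
    · linarith
    · linarith
    · linarith
  · refine le_trans hmA (max_le ?_ (max_le ?_ ?_))
    · linarith
    · linarith
    · linarith
  · rcases le_total α (2/3) with hc | hc
    · refine le_trans hmA (max_le ?_ (max_le ?_ ?_))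
      · linarith
      · linarith
      · linarith
    · refine le_trans hmB (max_le ?_ (max_le ?_ ?_))
      · linarith
      · linarith
      · rcases le_total α d with h' | h'
        · linarith
        · linarith
  · rcases le_total α (2/3) with hc | hc
    · refine le_trans hmA (max_le ?_ (max_le ?_ ?_))
      · linarith
      · linarith
      · linarith
    · refine le_trans hmB (max_le ?_ (max_le ?_ ?_))
      · linarith
      · linarith
      · rcases le_total α d with h' | h'
        · linarith
        · linarith

/-- Symmetric DMT of the interference channel with non-fading direct
links and fading cross links:
`inf{ r̄(0,y₁,0,y₂) : y₁,y₂ ∈ [0,d] } = min(1, max(1/2, 1-α, α-d), max(1/2, 1-α/2, (α-d)/2))`. -/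
theorem stmt_17 (α d : ℝ) (hα : 0 ≤ α) (hd : 0 ≤ d) :
    sInf {z : ℝ | ∃ y₁ y₂ : ℝ,
        0 ≤ y₁ ∧ y₁ ≤ d ∧ 0 ≤ y₂ ∧ y₂ ≤ d ∧
        z = rbar α 0 y₁ 0 y₂} =
      min 1
        (min (max (1/2) (max (1 - α) (α - d)))
          (max (1/2) (max (1 - α/2) ((α - d)/2)))) := by
  have hbdd : BddBelow {z : ℝ | ∃ y₁ y₂ : ℝ,
      0 ≤ y₁ ∧ y₁ ≤ d ∧ 0 ≤ y₂ ∧ y₂ ≤ d ∧ z = rbar α 0 y₁ 0 y₂} := by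
    refine ⟨0, ?_⟩
    rintro z ⟨y₁, y₂, -, -, -, -, rfl⟩
    unfold rbar
    positivity
  refine le_antisymm (le_min ?_ (le_min ?_ ?_)) ?_
  · -- sInf ≤ 1 via the point (0,0)
    refine csInf_le_of_le hbdd ⟨0, 0, le_rfl, hd, le_rfl, hd, rfl⟩ ?_
    calc rbar α 0 0 0 0 ≤ max (1:ℝ) 0 := by unfold rbar; simp only [sub_zero]; exact min_le_left _ _
      _ ≤ 1 := by norm_num
  · -- sInf ≤ max (1/2) (max (1-α) (α-d)) via y₁ = y₂ = min d (max (α-1/2) 0)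
    set y : ℝ := min d (max (α - 1/2) 0) with hydef
    have hy0 : 0 ≤ y := le_min hd (le_max_right _ _)
    have hy1 : y ≤ d := min_le_left _ _
    refine csInf_le_of_le hbdd ⟨y, y, hy0, hy1, hy0, hy1, rfl⟩ ?_
    have hchain : rbar α 0 y 0 y ≤
        (max (max (1 - α + y) (α - y)) 0 + max (max (1 - α + y) (α - y)) 0) / 2 := by
      unfold rbar
      simp only [sub_zero]
      exact le_trans (min_le_right _ _) (le_trans (min_le_right _ _)
        (le_trans (min_le_right _ _) (le_trans (min_le_right _ _) (min_le_left _ _))))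
    have hM1a : (1/2 : ℝ) ≤ max (1/2 : ℝ) (max (1 - α) (α - d)) := le_max_left _ _
    have hM1b : 1 - α ≤ max (1/2 : ℝ) (max (1 - α) (α - d)) :=
      le_trans (le_max_left _ _) (le_max_right _ _)
    have hM1c : α - d ≤ max (1/2 : ℝ) (max (1 - α) (α - d)) :=
      le_trans (le_max_right _ _) (le_max_right _ _)
    have hA : max (max (1 - α + y) (α - y)) 0 ≤ max (1/2 : ℝ) (max (1 - α) (α - d)) := by
      refine max_le (max_le ?_ ?_) ?_
      · have hy2 : y ≤ max (α - 1/2) 0 := min_le_right _ _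
        rcases le_total α (1/2) with h | h
        · have hmx : max (α - 1/2) 0 = 0 := max_eq_right (by linarith)
          linarith
        · have hmx : max (α - 1/2) 0 = α - 1/2 := max_eq_left (by linarith)
          linarith
      · rcases le_total d (max (α - 1/2) 0) with h | h
        · have hy' : y = d := min_eq_left h
          linarith
        · have hy' : y = max (α - 1/2) 0 := min_eq_right h
          rcases le_total α (1/2) with h' | h'
          · have hmx : max (α - 1/2) 0 = 0 := max_eq_right (by linarith)
            linarith
          · have hmx : max (α - 1/2) 0 = α - 1/2 := max_eq_left (by linarith)
            linarith
      · linarith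
    linarith
  · -- sInf ≤ max (1/2) (max (1-α/2) ((α-d)/2)) via y₁ = y₂ = min d (max (α-1) 0)
    set y : ℝ := min d (max (α - 1) 0) with hydef
    have hy0 : 0 ≤ y := le_min hd (le_max_right _ _)
    have hy1 : y ≤ d := min_le_left _ _
    refine csInf_le_of_le hbdd ⟨y, y, hy0, hy1, hy0, hy1, rfl⟩ ?_
    have hchain : rbar α 0 y 0 y ≤
        (max (1 - α + y) 0 + max (max (1:ℝ) (α - y)) 0) / 2 := by
      unfold rbar
      simp only [sub_zero]
      exact le_trans (min_le_right _ _) (le_trans (min_le_right _ _) (min_le_left _ _))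
    have hM2a : (1/2 : ℝ) ≤ max (1/2 : ℝ) (max (1 - α/2) ((α - d)/2)) := le_max_left _ _
    have hM2b : 1 - α/2 ≤ max (1/2 : ℝ) (max (1 - α/2) ((α - d)/2)) :=
      le_trans (le_max_left _ _) (le_max_right _ _)
    have hM2c : (α - d)/2 ≤ max (1/2 : ℝ) (max (1 - α/2) ((α - d)/2)) :=
      le_trans (le_max_right _ _) (le_max_right _ _)
    rcases le_total α 1 with h | h
    · have hy2 : y ≤ max (α - 1) 0 := min_le_right _ _
      have hmx : max (α - 1) 0 = 0 := max_eq_right (by linarith)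
      have h11 : max (1 - α + y) 0 ≤ 1 - α := max_le (by linarith) (by linarith)
      have h24 : max (max (1:ℝ) (α - y)) 0 ≤ 1 :=
        max_le (max_le (by norm_num) (by linarith)) (by norm_num)
      linarith
    · rcases le_total d (α - 1) with h' | h'
      · have hy' : y = d := min_eq_left (le_trans h' (le_max_left _ _))
        have h11 : max (1 - α + y) 0 ≤ 0 := max_le (by linarith) le_rfl
        have h24 : max (max (1:ℝ) (α - y)) 0 ≤ α - d :=
          max_le (max_le (by linarith) (by linarith)) (by linarith)
        linarith
      · have hmx : max (α - 1) 0 = α - 1 := max_eq_left (by linarith)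
        have hy' : y = α - 1 := by rw [hydef, hmx]; exact min_eq_right h'
        have h11 : max (1 - α + y) 0 ≤ 0 := max_le (by linarith) le_rfl
        have h24 : max (max (1:ℝ) (α - y)) 0 ≤ 1 :=
          max_le (max_le (by norm_num) (by linarith)) (by norm_num)
        linarith
  · -- lower bound
    refine le_csInf ⟨rbar α 0 0 0 0, 0, 0, le_rfl, hd, le_rfl, hd, rfl⟩ ?_
    rintro z ⟨y₁, y₂, h1, h2, h3, h4, rfl⟩
    exact rbar_lb α d y₁ y₂ hα hd h1 h2 h3 h4
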